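/- Let (Ω, 𝔉, P) be a probability space, ι a finite index set, and R ∈ ℕ. Let ρ : Fin R → Fin R → ι → ℝ, and let ξ : Fin R → ι → Ω → ℝ be square-integrable random variables with E[ξ_r(i)] = 0 for all r, i, and E[ξ_r(i)·ξ_{r'}(i')] = ρ_{r,r'}(i) if i = i', and 0 if i ≠ i'. Let ω : Fin R → ι → ℝ, let ψ : ι → ℤ → ℝ be finitely supported in the ℤ-variable, and let g : ℤ → ℝ be finitely supported. Define X_r(t) = Σ_{i∈ι} ω_r(i)·ψ_i(t)·ξ_r(i) and d_r = Σ_{t∈ℤ} X_r(t)·g(t). Then for all r, r' ∈ Fin R: E[d_r·d_{r'}] = Σ_{i∈ι} ω_r(i)·ω_{r'}(i)·ρ_{r,r'}(i)·(Σ_{t∈ℤ} ψ_i(t)·g(t))². -/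

import Mathlib

open MeasureTheory


private lemma memLp_two_integrable_mul {Ω : Type*} [MeasurableSpace Ω] {μ : Measure Ω}
    {f h : Ω → ℝ} (hf : MemLp f 2 μ) (hh : MemLp h 2 μ) :
    Integrable (fun ω => f ω * h ω) μ := by
  refine (hf.integrable_sq.add hh.integrable_sq).mono'
    (hf.aestronglyMeasurable.mul hh.aestronglyMeasurable) ?_
  filter_upwards with ω
  rw [Real.norm_eq_abs, abs_mul]
  simp only [Pi.add_apply]
  nlinarith [sq_nonneg (|f ω| - |h ω|), sq_abs (f ω), sq_abs (h ω),
    abs_nonneg (f ω), abs_nonneg (h ω)]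

/-- expectation of the raw wavelet cross-periodogram for a replicate
locally stationary wavelet process with cross-replicate innovation dependence `ρ`. -/
theorem raw_cross_periodogram_expectation_coherence
    {Ω : Type*} [MeasurableSpace Ω] (μ : Measure Ω) [IsProbabilityMeasure μ]
    {ι : Type*} [Fintype ι] [DecidableEq ι] (R : ℕ)
    (ρ : Fin R → Fin R → ι → ℝ)
    (ξ : Fin R → ι → Ω → ℝ)
    (hL2 : ∀ r i, MemLp (ξ r i) 2 μ)
    (hmean : ∀ r i, ∫ ω, ξ r i ω ∂μ = 0)
    (hcov : ∀ r r' i i', ∫ ω, ξ r i ω * ξ r' i' ω ∂μ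
        = if i = i' then ρ r r' i else 0)
    (a : Fin R → ι → ℝ) (ψ : ι → ℤ → ℝ)
    (hψ : ∀ i, (Function.support (ψ i)).Finite)
    (g : ℤ → ℝ) (hg : (Function.support g).Finite)
    (X : Fin R → ℤ → Ω → ℝ)
    (hX : ∀ r t ω, X r t ω = ∑ i : ι, a r i * ψ i t * ξ r i ω)
    (d : Fin R → Ω → ℝ)
    (hd : ∀ r ω, d r ω = ∑' t : ℤ, X r t ω * g t) :
    ∀ r r' : Fin R,
      ∫ ω, d r ω * d r' ω ∂μ
        = ∑ i : ι, a r i * a r' i * ρ r r' i * (∑' t : ℤ, ψ i t * g t) ^ 2 := by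

  intro r r'
  classical
  set S := hg.toFinset with hS
  have hgS : ∀ t ∉ S, g t = 0 := by
    intro t ht
    by_contra h
    exact ht (hg.mem_toFinset.mpr h)
  have hc : ∀ i : ι, (∑' t : ℤ, ψ i t * g t) = ∑ t ∈ S, ψ i t * g t := by
    intro i
    refine tsum_eq_sum ?_
    intro t ht
    rw [hgS t ht, mul_zero]
  have hd' : ∀ (r : Fin R) (ω : Ω),
      d r ω = ∑ i : ι, (a r i * (∑' t : ℤ, ψ i t * g t)) * ξ r i ω := by
    intro r ω
    rw [hd]
    have h1 : (∑' t : ℤ, X r t ω * g t) = ∑ t ∈ S, X r t ω * g t := by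
      refine tsum_eq_sum ?_
      intro t ht
      rw [hgS t ht, mul_zero]
    rw [h1]
    calc ∑ t ∈ S, X r t ω * g t
        = ∑ t ∈ S, ∑ i : ι, a r i * ψ i t * ξ r i ω * g t := by
          refine Finset.sum_congr rfl fun t _ => ?_
          rw [hX, Finset.sum_mul]
      _ = ∑ i : ι, (a r i * (∑' t : ℤ, ψ i t * g t)) * ξ r i ω := by
          rw [Finset.sum_comm]
          refine Finset.sum_congr rfl fun i _ => ?_
          rw [hc, Finset.mul_sum, Finset.sum_mul]
          refine Finset.sum_congr rfl fun t _ => ?_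
          ring
  have hint : ∀ (i i' : ι), Integrable (fun ω => ξ r i ω * ξ r' i' ω) μ :=
    fun i i' => memLp_two_integrable_mul (hL2 r i) (hL2 r' i')
  have key : ∫ ω, d r ω * d r' ω ∂μ
      = ∑ i : ι, ∑ i' : ι, (a r i * (∑' t : ℤ, ψ i t * g t)) *
          (a r' i' * (∑' t : ℤ, ψ i' t * g t)) * ∫ ω, ξ r i ω * ξ r' i' ω ∂μ := by
    have h2 : (fun ω => d r ω * d r' ω)
        = fun ω => ∑ i : ι, ∑ i' : ι, (a r i * (∑' t : ℤ, ψ i t * g t)) *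
            (a r' i' * (∑' t : ℤ, ψ i' t * g t)) * (ξ r i ω * ξ r' i' ω) := by
      funext ω
      rw [hd' r ω, hd' r' ω, Finset.sum_mul_sum]
      refine Finset.sum_congr rfl fun i _ => Finset.sum_congr rfl fun i' _ => by ring
    rw [h2, integral_finset_sum]
    · refine Finset.sum_congr rfl fun i _ => ?_
      rw [integral_finset_sum]
      · exact Finset.sum_congr rfl fun i' _ => integral_const_mul _ _
      · intro i' _
        exact (hint i i').const_mul _
    · intro i _
      exact integrable_finset_sum _ fun i' _ => (hint i i').const_mul _
  rw [key]
  refine Finset.sum_congr rfl fun i _ => ?_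
  rw [Finset.sum_eq_single i]
  · rw [hcov, if_pos rfl]; ring
  · intro i' _ hne
    rw [hcov, if_neg (Ne.symm hne), mul_zero]
  · intro h; exact absurd (Finset.mem_univ i) h
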